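/- Let Y ⊂ ℝ^n and X ⊂ ℝ^m be nonempty compact convex sets, f ∈ C¹(Y×X) convex on Y×X, g ∈ C¹(Y×X) with components g_i convex on Y × X^ε for some ε > 0, and (Q^k) a sequence of convex L-Lipschitz functions on Y with Q̲ ≤ Q^k ≤ Q̄ for continuous Q̲, Q̄. Assume the uniform Slater condition: there exist r, κ > 0 such that for every x ∈ X there exists y ∈ Y with B(y, r) ∩ Aff(Y) ⊆ Y, Ay + Bx = b, and g(y, x) ≤ −κ𝟙. Let (x^k) ⊂ X, ε^k ≥ 0 with ε^k → 0, y^k an ε^k-optimal feasible solution to inf{f(y, x^k) + Q^k(y) : y ∈ Y, Ay + Bx^k = b, g(y, x^k) ≤ 0}, and (λ^k, μ^k) an ε^k-optimal solution to the associated dual problem. Define η^k as the optimal value of max_{y∈Y} ⟨∇_y f(y^k, x^k) + A^T λ^k + Σ_i μ^k(i) ∇_y g_i(y^k, x^k), y^k − y⟩ + Q^k(y^k) − Q^k(y). Then η^k → 0 as k → ∞. -/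

import Mathlib

open Matrix Filter
open scoped RealInnerProductSpace Pointwise

/-- Gradient inequality for a differentiable convex function on a convex set. -/
lemma grad_ineq_aux {E : Type*} [NormedAddCommGroup E] [InnerProductSpace ℝ E] [CompleteSpace E]
    {S : Set E} (hS : Convex ℝ S) {φ : E → ℝ} (hφ : ConvexOn ℝ S φ) {a y : E}
    (hd : DifferentiableAt ℝ φ a) (ha : a ∈ S) (hy : y ∈ S) :
    ⟪gradient φ a, y - a⟫ ≤ φ y - φ a := by
  set ψ : ℝ → ℝ := fun t => φ (a + t • (y - a)) with hψ
  have hconv : ConvexOn ℝ (Set.Icc (0:ℝ) 1) ψ := by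
    have hcomp := (hφ.comp_affineMap (AffineMap.lineMap a y))
    refine ConvexOn.subset (ConvexOn.congr hcomp ?_) ?_ (convex_Icc 0 1)
    · intro t ht; simp only [Function.comp, AffineMap.lineMap_apply, hψ, vsub_eq_sub,
        vadd_eq_add]
      rw [add_comm]
    · intro t ht
      simp only [Set.mem_preimage, AffineMap.lineMap_apply, vsub_eq_sub, vadd_eq_add]
      rw [add_comm]
      exact hS.add_smul_sub_mem ha hy ht
  have hda : HasDerivAt ψ ⟪gradient φ a, y - a⟫ 0 := by
    have h1 : HasDerivAt (fun t : ℝ => a + t • (y - a)) (y - a) 0 := by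
      simpa using ((hasDerivAt_id (0:ℝ)).smul_const (y - a)).const_add a
    have h2 := hd.hasGradientAt.hasFDerivAt
    have h1' : HasDerivAt (fun t : ℝ => a + t • (y - a)) (y - a) 0 := h1
    have h3 := HasFDerivAt.comp_hasDerivAt 0 (by simpa using h2) h1'
    rw [gradient, InnerProductSpace.toDual_symm_apply]
    exact h3
  have hψ0 : ψ 0 = φ a := by simp [hψ]
  have hψ1 : ψ 1 = φ y := by simp [hψ]
  have hslope : ∀ t ∈ Set.Ioc (0:ℝ) 1, slope ψ 0 t ≤ φ y - φ a := by
    intro t ht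
    have h01 : ψ t ≤ (1 - t) * ψ 0 + t * ψ 1 := by
      have := hconv.2 (Set.mem_Icc.2 ⟨le_refl 0, zero_le_one⟩)
        (Set.mem_Icc.2 ⟨zero_le_one, le_refl 1⟩)
        (by linarith [ht.2] : (0:ℝ) ≤ 1 - t) (le_of_lt ht.1) (by ring)
      simpa using this
    rw [slope_def_field, sub_zero, div_le_iff₀ ht.1]
    rw [hψ0, hψ1] at h01
    nlinarith [ht.1]
  have htend : Tendsto (slope ψ 0) (nhdsWithin 0 (Set.Ioi 0)) (nhds ⟪gradient φ a, y - a⟫) := by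
    exact (hasDerivAt_iff_tendsto_slope.1 hda).mono_left
      (nhdsWithin_mono 0 (by intro z hz; exact ne_of_gt hz))
  refine le_of_tendsto htend ?_
  filter_upwards [Ioc_mem_nhdsGT_of_mem (by norm_num : (0:ℝ) ∈ Set.Ico (0:ℝ) 1)] with t ht
  exact hslope t ht

section PartialGrad

variable {E G : Type*} [NormedAddCommGroup E] [InnerProductSpace ℝ E] [CompleteSpace E]
  [NormedAddCommGroup G] [NormedSpace ℝ G]

lemma partial_diff_aux {F : E × G → ℝ} (hF : ContDiff ℝ 1 F) (x : G) :
    Differentiable ℝ (fun y : E => F (y, x)) := fun y =>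
  (hF.differentiable one_ne_zero (y, x)).comp y
    ((differentiable_id.prodMk (differentiable_const x)) y)

lemma partial_grad_eq_aux {F : E × G → ℝ} (hF : ContDiff ℝ 1 F) (y : E) (x : G) :
    gradient (fun y' : E => F (y', x)) y =
      (InnerProductSpace.toDual ℝ E).symm
        ((fderiv ℝ F (y, x)).comp (ContinuousLinearMap.inl ℝ E G)) := by
  have h1 : HasFDerivAt (fun y' : E => F (y', x))
      ((fderiv ℝ F (y, x)).comp (ContinuousLinearMap.inl ℝ E G)) y :=
    ((hF.differentiable one_ne_zero (y, x)).hasFDerivAt).comp y (hasFDerivAt_prodMk_left y x)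
  rw [gradient, h1.fderiv]

lemma partial_grad_cont_aux {F : E × G → ℝ} (hF : ContDiff ℝ 1 F) :
    Continuous (fun w : E × G => gradient (fun y' : E => F (y', w.2)) w.1) := by
  have h : Continuous (fun w : E × G =>
      (InnerProductSpace.toDual ℝ E).symm
        ((fderiv ℝ F w).comp (ContinuousLinearMap.inl ℝ E G))) :=
    (InnerProductSpace.toDual ℝ E).symm.continuous.comp
      ((hF.continuous_fderiv one_ne_zero).clm_comp continuous_const)
  refine h.congr ?_
  intro w
  rw [partial_grad_eq_aux hF]

end PartialGrad

lemma partial_convexOn_aux {E G : Type*} [NormedAddCommGroup E] [NormedSpace ℝ E]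
    [NormedAddCommGroup G] [NormedSpace ℝ G]
    {S : Set E} {T : Set G} (hS : Convex ℝ S) {φ : E × G → ℝ}
    (hφ : ConvexOn ℝ (S ×ˢ T) φ) {x : G} (hxT : x ∈ T) :
    ConvexOn ℝ S (fun y => φ (y, x)) := by
  refine ⟨hS, ?_⟩
  intro u hu w hw s t hs ht hst
  have h := hφ.2 (Set.mk_mem_prod hu hxT) (Set.mk_mem_prod hw hxT) hs ht hst
  have h2 : s • ((u, x) : E × G) + t • ((w, x) : E × G) = ((s • u + t • w : E), x) := by
    rw [Prod.smul_mk, Prod.smul_mk, Prod.mk_add_mk, ← add_smul, hst, one_smul]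
  rw [h2] at h
  exact h

set_option maxHeartbeats 2000000

/-- Proposition 5.2: vanishing of the inexactness terms η^k when the
optimization errors ε^k vanish. -/
theorem stmt_7 {n m q p : ℕ}
    (Y : Set (EuclideanSpace ℝ (Fin n))) (hYne : Y.Nonempty)
    (hYcomp : IsCompact Y) (hYconv : Convex ℝ Y)
    (X : Set (EuclideanSpace ℝ (Fin m))) (hXne : X.Nonempty)
    (hXcomp : IsCompact X) (hXconv : Convex ℝ X)
    (A : Matrix (Fin q) (Fin n) ℝ) (B : Matrix (Fin q) (Fin m) ℝ) (b : Fin q → ℝ)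
    (f : EuclideanSpace ℝ (Fin n) → EuclideanSpace ℝ (Fin m) → ℝ)
    (g : EuclideanSpace ℝ (Fin n) → EuclideanSpace ℝ (Fin m) → Fin p → ℝ)
    -- f ∈ C¹(Y×X) and convex on Y×X:
    (hfC1 : ContDiff ℝ 1
      (fun z : EuclideanSpace ℝ (Fin n) × EuclideanSpace ℝ (Fin m) => f z.1 z.2))
    (hfconv : ConvexOn ℝ (Y ×ˢ X)
      (fun z : EuclideanSpace ℝ (Fin n) × EuclideanSpace ℝ (Fin m) => f z.1 z.2))
    -- g ∈ C¹(Y×X) with components convex on Y × X^ε for some ε > 0: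
    (ε : ℝ) (hεpos : 0 < ε)
    (hgC1 : ∀ i, ContDiff ℝ 1
      (fun z : EuclideanSpace ℝ (Fin n) × EuclideanSpace ℝ (Fin m) => g z.1 z.2 i))
    (hgconv : ∀ i, ConvexOn ℝ (Y ×ˢ (X + Metric.closedBall 0 ε))
      (fun z : EuclideanSpace ℝ (Fin n) × EuclideanSpace ℝ (Fin m) => g z.1 z.2 i))
    -- (Q^k): convex L-Lipschitz functions on Y with Q̲ ≤ Q^k ≤ Q̄:
    (L : NNReal) (Q : ℕ → EuclideanSpace ℝ (Fin n) → ℝ)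
    (hQconv : ∀ k, ConvexOn ℝ Y (Q k))
    (hQlip : ∀ k, LipschitzOnWith L (Q k) Y)
    (Qlow Qup : EuclideanSpace ℝ (Fin n) → ℝ)
    (hQlow : ContinuousOn Qlow Y) (hQup : ContinuousOn Qup Y)
    (hQbdd : ∀ k, ∀ y ∈ Y, Qlow y ≤ Q k y ∧ Q k y ≤ Qup y)
    -- uniform Slater condition (H):
    (r κ : ℝ) (hr : 0 < r) (hκ : 0 < κ)
    (hH : ∀ x ∈ X, ∃ y ∈ Y,
      Metric.closedBall y r ∩ (affineSpan ℝ Y : Set (EuclideanSpace ℝ (Fin n))) ⊆ Y ∧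
      A *ᵥ y + B *ᵥ x = b ∧ ∀ i, g y x i ≤ -κ)
    -- sequences (x^k) ⊆ X and ε^k ≥ 0 with ε^k → 0:
    (x : ℕ → EuclideanSpace ℝ (Fin m)) (hx : ∀ k, x k ∈ X)
    (εk : ℕ → ℝ) (hεk : ∀ k, 0 ≤ εk k) (hεk0 : Tendsto εk atTop (nhds 0))
    -- v k is the optimal value of the primal problem at x^k:
    (v : ℕ → ℝ)
    (hv : ∀ k, IsGLB {c : ℝ | ∃ y ∈ Y, A *ᵥ y + B *ᵥ x k = b ∧
      (∀ i, g y (x k) i ≤ 0) ∧ c = f y (x k) + Q k y} (v k))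
    -- y^k is an ε^k-optimal feasible primal solution:
    (yk : ℕ → EuclideanSpace ℝ (Fin n)) (hykY : ∀ k, yk k ∈ Y)
    (hykfeas : ∀ k, A *ᵥ yk k + B *ᵥ x k = b ∧ ∀ i, g (yk k) (x k) i ≤ 0)
    (hykopt : ∀ k, f (yk k) (x k) + Q k (yk k) ≤ v k + εk k)
    -- (λ^k, μ^k) is an ε^k-optimal feasible dual solution:
    (lam : ℕ → EuclideanSpace ℝ (Fin q)) (mu : ℕ → Fin p → ℝ)
    (hmu : ∀ k, 0 ≤ mu k)
    (hlamfeas : ∀ k, ∃ y ∈ (affineSpan ℝ Y : Set (EuclideanSpace ℝ (Fin n))),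
      lam k = (A *ᵥ y + B *ᵥ x k - b : Fin q → ℝ))
    (hdualopt : ∀ k, ∀ y ∈ Y,
      f y (x k) + Q k y + lam k ⬝ᵥ (A *ᵥ y + B *ᵥ x k - b) + mu k ⬝ᵥ g y (x k)
        ≥ v k - εk k)
    -- η^k is the optimal value of the linearization problem:
    (η : ℕ → ℝ)
    (hη : ∀ k, IsLUB {c : ℝ | ∃ y ∈ Y,
      c = ⟪gradient (fun y' => f y' (x k)) (yk k), yk k - y⟫
            + (Aᵀ *ᵥ lam k) ⬝ᵥ (yk k - y)
            + (∑ i, mu k i * ⟪gradient (fun y' => g y' (x k) i) (yk k), yk k - y⟫)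
            + Q k (yk k) - Q k y} (η k)) :
    Tendsto η atTop (nhds 0) := by
  classical
  -- nonnegativity of η
  have hη0 : ∀ k, 0 ≤ η k := by
    intro k
    refine (hη k).1 ⟨yk k, hykY k, ?_⟩
    rw [sub_self]
    simp only [inner_zero_right, dotProduct_zero, mul_zero, Finset.sum_const_zero,
      add_zero, sub_self]
    ring
  -- diameter bound
  obtain ⟨R, hR⟩ := hYcomp.isBounded.exists_norm_le
  set D : ℝ := 2 * R + 1 with hD
  have hD0 : 0 < D := by
    have : (0:ℝ) ≤ R := le_trans (norm_nonneg _) (hR _ hYne.choose_spec)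
    simp only [hD]; linarith
  have hDy : ∀ y ∈ Y, ∀ y' ∈ Y, ‖y - y'‖ ≤ D := by
    intro y hy y' hy'
    calc ‖y - y'‖ ≤ ‖y‖ + ‖y'‖ := norm_sub_le _ _
    _ ≤ D := by have := hR y hy; have := hR y' hy'; simp only [hD]; linarith
  -- bound on f over Y ×ˢ X
  obtain ⟨Cf, hCf⟩ := (hYcomp.prod hXcomp).exists_bound_of_continuousOn
    (hfC1.continuous.continuousOn)
  -- bounds on Qup, Qlow over Y
  obtain ⟨CQu, hCQu⟩ := hYcomp.exists_bound_of_continuousOn hQup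
  obtain ⟨CQl, hCQl⟩ := hYcomp.exists_bound_of_continuousOn hQlow
  -- bound on εk
  obtain ⟨Cε, hCε⟩ := hεk0.bddAbove_range
  have hCε' : ∀ k, εk k ≤ Cε := fun k => hCε ⟨k, rfl⟩
  -- lower bound on v
  have hvlow : ∀ k, -(Cf + CQl) ≤ v k := by
    intro k
    refine (hv k).2 ?_
    rintro c ⟨y, hy, -, -, rfl⟩
    have h1 : |f y (x k)| ≤ Cf := by
      have := hCf (y, x k) (Set.mk_mem_prod hy (hx k))
      simpa [Real.norm_eq_abs] using this
    have h2 : |Qlow y| ≤ CQl := by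
      have := hCQl y hy
      simpa [Real.norm_eq_abs] using this
    have h3 := (hQbdd k y hy).1
    have := abs_le.1 h1
    have := abs_le.1 h2
    linarith [this.1]
  -- bound on the dual multipliers
  set Mμ : ℝ := max ((2 * Cf + CQu + CQl + Cε) / κ) 0 with hMμdef
  have hMμ0 : 0 ≤ Mμ := le_max_right _ _
  have hMμ : ∀ k, ∑ i, mu k i ≤ Mμ := by
    intro k
    obtain ⟨ys, hysY, -, hyseq, hysg⟩ := hH (x k) (hx k)
    have hdual := hdualopt k ys hysY
    have h0 : (A *ᵥ ys + B *ᵥ x k - b : Fin q → ℝ) = 0 := by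
      rw [hyseq]; simp
    rw [h0, dotProduct_zero] at hdual
    have hgd : mu k ⬝ᵥ g ys (x k) ≤ -κ * ∑ i, mu k i := by
      rw [dotProduct, Finset.mul_sum]
      refine Finset.sum_le_sum fun i _ => ?_
      have := mul_le_mul_of_nonneg_left (hysg i) (hmu k i)
      calc mu k i * g ys (x k) i ≤ mu k i * (-κ) := this
      _ = -κ * mu k i := by ring
    have h1 : |f ys (x k)| ≤ Cf := by
      have := hCf (ys, x k) (Set.mk_mem_prod hysY (hx k))
      simpa [Real.norm_eq_abs] using this
    have h2 : Q k ys ≤ CQu := by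
      have := (hQbdd k ys hysY).2
      have h2' := hCQu ys hysY
      rw [Real.norm_eq_abs] at h2'
      linarith [(abs_le.1 h2').1, (abs_le.1 h2').2]
    have h3 := hvlow k
    have h4 := hCε' k
    have h5 : κ * ∑ i, mu k i ≤ 2 * Cf + CQu + CQl + Cε := by
      linarith [hdual, hgd, (abs_le.1 h1).1, (abs_le.1 h1).2, h2, h3, h4]
    have h6 : ∑ i, mu k i ≤ (2 * Cf + CQu + CQl + Cε) / κ := by
      rw [le_div_iff₀ hκ]; linarith
    exact le_trans h6 (le_max_left _ _)
  have hmusum0 : ∀ k, (0:ℝ) ≤ ∑ i, mu k i :=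
    fun k => Finset.sum_nonneg fun i _ => hmu k i
  -- gradient maps and their uniform continuity on Y ×ˢ X
  set Φf : EuclideanSpace ℝ (Fin n) × EuclideanSpace ℝ (Fin m) → EuclideanSpace ℝ (Fin n) := fun w => gradient (fun y' => f y' w.2) w.1 with hΦf
  set Φg : Fin p → EuclideanSpace ℝ (Fin n) × EuclideanSpace ℝ (Fin m) → EuclideanSpace ℝ (Fin n) := fun i w => gradient (fun y' => g y' w.2 i) w.1 with hΦg
  set Φ : EuclideanSpace ℝ (Fin n) × EuclideanSpace ℝ (Fin m) → EuclideanSpace ℝ (Fin n) × (Fin p → EuclideanSpace ℝ (Fin n)) := fun w => (Φf w, fun i => Φg i w) with hΦdef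
  have hΦcont : Continuous Φ :=
    (partial_grad_cont_aux hfC1).prodMk
      (continuous_pi fun i => partial_grad_cont_aux (hgC1 i))
  have hΦuc : UniformContinuousOn Φ (Y ×ˢ X) :=
    (hYcomp.prod hXcomp).uniformContinuousOn_of_continuous hΦcont.continuousOn
  rw [Metric.tendsto_atTop]
  intro δ hδ
  -- choose θ and modulus δ'
  set θ : ℝ := δ / (2 * (D * (1 + Mμ) + 1)) with hθdef
  have hθpos : 0 < θ := by
    apply div_pos hδ
    have := mul_nonneg hD0.le (by linarith : (0:ℝ) ≤ 1 + Mμ)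
    linarith
  obtain ⟨δ', hδ'pos, hδ'⟩ := (Metric.uniformContinuousOn_iff).1 hΦuc θ hθpos
  set t : ℝ := min 1 (δ' / (2 * D)) with htdef
  have ht0 : 0 < t := lt_min one_pos (div_pos hδ'pos (by linarith))
  have ht1 : t ≤ 1 := min_le_left _ _
  have htD : t * D < δ' := by
    have h1 : t ≤ δ' / (2 * D) := min_le_right _ _
    have h2 : t * (2 * D) ≤ δ' := by
      rw [← le_div_iff₀ (by linarith : (0:ℝ) < 2 * D)]
      exact h1
    linarith [mul_pos ht0 hD0]
  -- eventually εk is small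
  have hev : ∀ᶠ k in atTop, εk k < t * δ / 8 := by
    have := hεk0
    rw [Metric.tendsto_atTop] at this
    obtain ⟨N, hN⟩ := this (t * δ / 8) (by positivity)
    refine eventually_atTop.2 ⟨N, fun k hk => ?_⟩
    have := hN k hk
    rw [Real.dist_eq, sub_zero, abs_of_nonneg (hεk k)] at this
    exact this
  obtain ⟨N, hN⟩ := eventually_atTop.1 hev
  refine ⟨N, fun k hk => ?_⟩
  -- main estimate: η k ≤ δ/4 + θ * D * (1 + Mμ)
  have hub : ∀ c ∈ {c : ℝ | ∃ y ∈ Y,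
      c = ⟪gradient (fun y' => f y' (x k)) (yk k), yk k - y⟫
            + (Aᵀ *ᵥ lam k) ⬝ᵥ (yk k - y)
            + (∑ i, mu k i * ⟪gradient (fun y' => g y' (x k) i) (yk k), yk k - y⟫)
            + Q k (yk k) - Q k y}, c ≤ δ / 4 + θ * D * (1 + Mμ) := by
    rintro c ⟨y, hy, rfl⟩
    set a : EuclideanSpace ℝ (Fin n) := yk k with ha
    set xx : EuclideanSpace ℝ (Fin m) := x k with hxx
    set z : EuclideanSpace ℝ (Fin n) := a + t • (y - a) with hz
    have hzY : z ∈ Y := hYconv.add_smul_sub_mem (hykY k) hy ⟨le_of_lt ht0, ht1⟩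
    have haz : a - z = t • (a - y) := by
      rw [hz, smul_sub, smul_sub]
      abel
    have hnaz : ‖a - z‖ ≤ t * D := by
      rw [haz, norm_smul, Real.norm_eq_abs, abs_of_pos ht0]
      exact mul_le_mul_of_nonneg_left (hDy a (hykY k) y hy) (le_of_lt ht0)
    -- uniform continuity estimate
    have hdistw : dist ((a, xx) : EuclideanSpace ℝ (Fin n) × EuclideanSpace ℝ (Fin m)) ((z, xx) : EuclideanSpace ℝ (Fin n) × EuclideanSpace ℝ (Fin m)) < δ' := by
      rw [Prod.dist_eq]
      simp only [dist_self]
      rw [max_eq_left dist_nonneg, dist_eq_norm]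
      exact lt_of_le_of_lt hnaz htD
    have hΦclose := hδ' (a, xx) (Set.mk_mem_prod (hykY k) (hx k))
      (z, xx) (Set.mk_mem_prod hzY (hx k)) hdistw
    have hΔf : ‖Φf (a, xx) - Φf (z, xx)‖ ≤ θ := by
      have h1 : dist (Φf (a, xx)) (Φf (z, xx)) ≤ dist (Φ (a, xx)) (Φ (z, xx)) := by
        rw [Prod.dist_eq]
        exact le_max_left _ _
      rw [← dist_eq_norm]
      exact le_of_lt (lt_of_le_of_lt h1 hΦclose)
    have hΔg : ∀ i, ‖Φg i (a, xx) - Φg i (z, xx)‖ ≤ θ := by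
      intro i
      have h1 : dist (Φg i (a, xx)) (Φg i (z, xx)) ≤ dist (Φ (a, xx)) (Φ (z, xx)) := by
        rw [Prod.dist_eq]
        refine le_trans ?_ (le_max_right _ _)
        exact dist_le_pi_dist ((Φ (a, xx)).2) ((Φ (z, xx)).2) i
      rw [← dist_eq_norm]
      exact le_of_lt (lt_of_le_of_lt h1 hΦclose)
    -- convexity of partial functions on Y
    have hφfconv : ConvexOn ℝ Y (fun y' => f y' xx) :=
      partial_convexOn_aux hYconv hfconv (hx k)
    have hxxball : xx ∈ X + Metric.closedBall 0 ε := by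
      rw [show xx = xx + 0 by simp]
      exact Set.add_mem_add (hx k) (Metric.mem_closedBall_self hεpos.le)
    have hφgconv : ∀ i, ConvexOn ℝ Y (fun y' => g y' xx i) := fun i =>
      partial_convexOn_aux hYconv (hgconv i) hxxball
    -- gradient inequalities at z
    have hgradf : ⟪Φf (z, xx), a - z⟫ ≤ f a xx - f z xx := by
      have := grad_ineq_aux hYconv hφfconv (partial_diff_aux hfC1 xx z) hzY (hykY k)
      exact this
    have hgradg : ∀ i, ⟪Φg i (z, xx), a - z⟫ ≤ g a xx i - g z xx i := by
      intro i
      exact grad_ineq_aux hYconv (hφgconv i) (partial_diff_aux (hgC1 i) xx z) hzY (hykY k)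
    -- term 1
    have hT1 : t * ⟪Φf (a, xx), a - y⟫ ≤ f a xx - f z xx + θ * (t * D) := by
      have e1 : t * ⟪Φf (a, xx), a - y⟫ = ⟪Φf (a, xx), a - z⟫ := by
        rw [haz, real_inner_smul_right]
      have e2 : ⟪Φf (a, xx), a - z⟫ =
          ⟪Φf (z, xx), a - z⟫ + ⟪Φf (a, xx) - Φf (z, xx), a - z⟫ := by
        rw [inner_sub_left]; ring
      have e3 : ⟪Φf (a, xx) - Φf (z, xx), a - z⟫ ≤ θ * (t * D) := by
        calc ⟪Φf (a, xx) - Φf (z, xx), a - z⟫ ≤ ‖Φf (a, xx) - Φf (z, xx)‖ * ‖a - z‖ :=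
              real_inner_le_norm _ _
        _ ≤ θ * (t * D) :=
              mul_le_mul hΔf hnaz (norm_nonneg _) (le_of_lt hθpos)
      rw [e1, e2]
      linarith [hgradf]
    -- term 3 (sum over i)
    have hT3 : t * (∑ i, mu k i * ⟪Φg i (a, xx), a - y⟫) ≤
        (mu k ⬝ᵥ g a xx - mu k ⬝ᵥ g z xx) + (∑ i, mu k i) * (θ * (t * D)) := by
      have step : ∀ i, t * (mu k i * ⟪Φg i (a, xx), a - y⟫) ≤
          mu k i * (g a xx i - g z xx i) + mu k i * (θ * (t * D)) := by
        intro i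
        have e1 : t * (mu k i * ⟪Φg i (a, xx), a - y⟫) =
            mu k i * ⟪Φg i (a, xx), a - z⟫ := by
          rw [haz, real_inner_smul_right]; ring
        have e3 : ⟪Φg i (a, xx) - Φg i (z, xx), a - z⟫ ≤ θ * (t * D) := by
          calc ⟪Φg i (a, xx) - Φg i (z, xx), a - z⟫
              ≤ ‖Φg i (a, xx) - Φg i (z, xx)‖ * ‖a - z‖ := real_inner_le_norm _ _
          _ ≤ θ * (t * D) := mul_le_mul (hΔg i) hnaz (norm_nonneg _) (le_of_lt hθpos)
        have e2 : ⟪Φg i (a, xx), a - z⟫ ≤ (g a xx i - g z xx i) + θ * (t * D) := by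
          have : ⟪Φg i (a, xx), a - z⟫ =
              ⟪Φg i (z, xx), a - z⟫ + ⟪Φg i (a, xx) - Φg i (z, xx), a - z⟫ := by
            rw [inner_sub_left]; ring
          rw [this]
          linarith [hgradg i]
        rw [e1]
        calc mu k i * ⟪Φg i (a, xx), a - z⟫
            ≤ mu k i * ((g a xx i - g z xx i) + θ * (t * D)) :=
              mul_le_mul_of_nonneg_left e2 (hmu k i)
        _ = mu k i * (g a xx i - g z xx i) + mu k i * (θ * (t * D)) := by ring
      calc t * (∑ i, mu k i * ⟪Φg i (a, xx), a - y⟫)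
          = ∑ i, t * (mu k i * ⟪Φg i (a, xx), a - y⟫) := by rw [Finset.mul_sum]
      _ ≤ ∑ i, (mu k i * (g a xx i - g z xx i) + mu k i * (θ * (t * D))) :=
            Finset.sum_le_sum fun i _ => step i
      _ = (mu k ⬝ᵥ g a xx - mu k ⬝ᵥ g z xx) + (∑ i, mu k i) * (θ * (t * D)) := by
            rw [Finset.sum_add_distrib, ← Finset.sum_mul]
            simp only [dotProduct, mul_sub]
            rw [Finset.sum_sub_distrib]
      _ ≤ (mu k ⬝ᵥ g a xx - mu k ⬝ᵥ g z xx) + (∑ i, mu k i) * (θ * (t * D)) := le_refl _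
    -- term 4 (Q)
    have hT4 : t * (Q k a - Q k y) ≤ Q k a - Q k z := by
      have hzconv : Q k z ≤ (1 - t) * Q k a + t * Q k y := by
        have hzeq : z = (1 - t) • a + t • y := by
          rw [hz, sub_smul, one_smul, smul_sub]
          abel
        rw [hzeq]
        exact (hQconv k).2 (hykY k) hy (by linarith) (le_of_lt ht0) (by ring)
      linarith
    -- term 2 (linear)
    have hT2 : t * ((Aᵀ *ᵥ lam k) ⬝ᵥ ((a - y : EuclideanSpace ℝ (Fin n)) : Fin n → ℝ)) =
        lam k ⬝ᵥ (A *ᵥ ((a - z : EuclideanSpace ℝ (Fin n)) : Fin n → ℝ)) := by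
      have e0 : ∀ w : Fin n → ℝ, (Aᵀ *ᵥ lam k) ⬝ᵥ w = lam k ⬝ᵥ (A *ᵥ w) := by
        intro w
        rw [Matrix.mulVec_transpose, Matrix.dotProduct_mulVec]
      rw [e0]
      have e1 : ((a - z : EuclideanSpace ℝ (Fin n)) : Fin n → ℝ) = t • ((a - y : EuclideanSpace ℝ (Fin n)) : Fin n → ℝ) := by
        rw [haz]; rfl
      rw [e1, Matrix.mulVec_smul, dotProduct_smul]
      simp [smul_eq_mul]
    -- the dual gap bound
    have hsum : (f a xx - f z xx) + lam k ⬝ᵥ (A *ᵥ ((a - z : EuclideanSpace ℝ (Fin n)) : Fin n → ℝ))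
        + (mu k ⬝ᵥ g a xx - mu k ⬝ᵥ g z xx) + (Q k a - Q k z) ≤ 2 * εk k := by
      have h1 : f a xx + Q k a ≤ v k + εk k := hykopt k
      have h2 := hdualopt k z hzY
      have h3 : mu k ⬝ᵥ g a xx ≤ 0 := by
        refine Finset.sum_nonpos fun i _ => ?_
        exact mul_nonpos_of_nonneg_of_nonpos (hmu k i) ((hykfeas k).2 i)
      have h4 : lam k ⬝ᵥ (A *ᵥ ((a - z : EuclideanSpace ℝ (Fin n)) : Fin n → ℝ)) =
          - (lam k ⬝ᵥ (A *ᵥ z + B *ᵥ xx - b)) := by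
        have e1 : (A *ᵥ ((a - z : EuclideanSpace ℝ (Fin n)) : Fin n → ℝ)) =
            (A *ᵥ a + B *ᵥ xx - b) - (A *ᵥ z + B *ᵥ xx - b) := by
          rw [WithLp.ofLp_sub, Matrix.mulVec_sub]
          abel
        have e2 : (A *ᵥ a + B *ᵥ xx - b : Fin q → ℝ) = 0 := by
          rw [(hykfeas k).1]; simp
        rw [e1, e2, zero_sub, dotProduct_neg]
      rw [h4]
      have := h2
      linarith [h1, this]
    -- combine
    have hcomb : t * (⟪Φf (a, xx), a - y⟫ + (Aᵀ *ᵥ lam k) ⬝ᵥ ((a - y : EuclideanSpace ℝ (Fin n)) : Fin n → ℝ)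
        + (∑ i, mu k i * ⟪Φg i (a, xx), a - y⟫) + Q k a - Q k y)
        ≤ 2 * εk k + θ * (t * D) + Mμ * (θ * (t * D)) := by
      have expand : t * (⟪Φf (a, xx), a - y⟫ + (Aᵀ *ᵥ lam k) ⬝ᵥ ((a - y : EuclideanSpace ℝ (Fin n)) : Fin n → ℝ)
          + (∑ i, mu k i * ⟪Φg i (a, xx), a - y⟫) + Q k a - Q k y)
          = t * ⟪Φf (a, xx), a - y⟫ + t * ((Aᵀ *ᵥ lam k) ⬝ᵥ ((a - y : EuclideanSpace ℝ (Fin n)) : Fin n → ℝ))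
          + t * (∑ i, mu k i * ⟪Φg i (a, xx), a - y⟫) + t * (Q k a - Q k y) := by ring
      rw [expand, hT2]
      have hμD : (∑ i, mu k i) * (θ * (t * D)) ≤ Mμ * (θ * (t * D)) := by
        apply mul_le_mul_of_nonneg_right (hMμ k)
        positivity
      linarith [hT1, hT3, hT4, hsum, hμD]
    -- divide by t
    have hc : ⟪Φf (a, xx), a - y⟫ + (Aᵀ *ᵥ lam k) ⬝ᵥ ((a - y : EuclideanSpace ℝ (Fin n)) : Fin n → ℝ)
        + (∑ i, mu k i * ⟪Φg i (a, xx), a - y⟫) + Q k a - Q k y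
        ≤ 2 * εk k / t + θ * D * (1 + Mμ) := by
      have h2 : ⟪Φf (a, xx), a - y⟫ + (Aᵀ *ᵥ lam k) ⬝ᵥ ((a - y : EuclideanSpace ℝ (Fin n)) : Fin n → ℝ)
          + (∑ i, mu k i * ⟪Φg i (a, xx), a - y⟫) + Q k a - Q k y
          ≤ (2 * εk k + θ * (t * D) + Mμ * (θ * (t * D))) / t := by
        rw [le_div_iff₀ ht0, mul_comm]
        exact hcomb
      have h3 : (2 * εk k + θ * (t * D) + Mμ * (θ * (t * D))) / t
          = 2 * εk k / t + θ * D * (1 + Mμ) := by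
        rw [eq_comm, div_add' _ _ _ (ne_of_gt ht0)]
        congr 1
        ring
      rw [h3] at h2
      exact h2
    have hεsmall : 2 * εk k / t ≤ δ / 4 := by
      have h4 := hN k hk
      rw [div_le_iff₀ ht0]
      nlinarith [h4]
    calc ⟪Φf (a, xx), a - y⟫ + (Aᵀ *ᵥ lam k) ⬝ᵥ ((a - y : EuclideanSpace ℝ (Fin n)) : Fin n → ℝ)
        + (∑ i, mu k i * ⟪Φg i (a, xx), a - y⟫) + Q k a - Q k y
        ≤ 2 * εk k / t + θ * D * (1 + Mμ) := hc
    _ ≤ δ / 4 + θ * D * (1 + Mμ) := by linarith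
  have hηle : η k ≤ δ / 4 + θ * D * (1 + Mμ) := (hη k).2 hub
  have hθD : θ * D * (1 + Mμ) ≤ δ / 2 := by
    have h1 : θ * (D * (1 + Mμ)) ≤ θ * (D * (1 + Mμ) + 1) :=
      mul_le_mul_of_nonneg_left (by linarith) hθpos.le
    have h2 : θ * (2 * (D * (1 + Mμ) + 1)) = δ := by
      rw [hθdef]; field_simp
    nlinarith [h1, h2]
  rw [Real.dist_eq, sub_zero, abs_of_nonneg (hη0 k)]
  linarith
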